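/- Let T ≥ 2, μ > 0, σ > 0, −1/(T−1) < ρ < 1 with θ = 1 + (T−1)ρ, and fix γ ≥ (μ + σ²θ/(Tμ))^T. Set q* = σ²θ/(σ²θ + T(μ − γ^{1/T})²), p* = 1 − q*, v* = q*μ + σ√(θ q*(1−q*)/T), u* = μ − v*. Then the two-point distribution P* = p*·δ_{(u*/p*)𝟙} + q*·δ_{(v*/q*)𝟙} on ℝ₊^T satisfies E[ξ̃] = μ𝟙, E[ξ̃ξ̃ᵀ] ⪯ Σ + μ²𝟙𝟙ᵀ, and P*(∏ₜ ξ̃ₜ ≥ γ) = q*. -/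

import Mathlib

open MeasureTheory

set_option maxHeartbeats 2000000 in
theorem stmt_15 (T : ℕ) (hT : 2 ≤ T) (μ σ ρ γ : ℝ) (hμ : 0 < μ) (hσ : 0 < σ)
    (hρ1 : -(1 / ((T : ℝ) - 1)) < ρ) (hρ2 : ρ < 1)
    (θ : ℝ) (hθ : θ = 1 + ((T : ℝ) - 1) * ρ)
    (hγ : (μ + σ^2 * θ / ((T : ℝ) * μ))^T ≤ γ)
    (q p v u : ℝ)
    (hq : q = σ^2 * θ / (σ^2 * θ + (T : ℝ) * (μ - γ ^ ((1 : ℝ) / (T : ℝ)))^2))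
    (hp : p = 1 - q)
    (hv : v = q * μ + σ * Real.sqrt (θ * q * (1 - q) / (T : ℝ)))
    (hu : u = μ - v) :
    let P : Measure (Fin T → ℝ) :=
      ENNReal.ofReal p • Measure.dirac (fun _ => u / p) +
      ENNReal.ofReal q • Measure.dirac (fun _ => v / q)
    IsProbabilityMeasure P ∧
    (∀ᵐ ξ ∂P, ∀ t, 0 ≤ ξ t) ∧
    (∀ t, ∫ ξ, ξ t ∂P = μ) ∧
    Matrix.PosSemidef (Matrix.of fun s t : Fin T =>
      ((if s = t then (1 - ρ) * σ^2 else 0) + ρ * σ^2 + μ^2) - ∫ ξ, ξ s * ξ t ∂P) ∧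
    P {ξ | γ ≤ ∏ t, ξ t} = ENNReal.ofReal q := by
  intro P
  -- ===== scalar groundwork =====
  obtain ⟨g, hg⟩ : ∃ g : ℝ, γ ^ ((1:ℝ)/(T:ℝ)) = g := ⟨_, rfl⟩
  rw [hg] at hq
  have hT1 : (1:ℝ) ≤ (T:ℝ) - 1 := by
    have : (2:ℝ) ≤ T := by exact_mod_cast hT
    linarith
  have hTpos : (0:ℝ) < T := by linarith
  have hTne : (T:ℝ) ≠ 0 := ne_of_gt hTpos
  have hθpos : 0 < θ := by
    have h1 : (0:ℝ) < (T:ℝ) - 1 := by linarith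
    have hinv : ((T:ℝ)-1) * (1/((T:ℝ)-1)) = 1 := by field_simp
    nlinarith [mul_lt_mul_of_pos_left hρ1 h1]
  obtain ⟨b0, hb0⟩ : ∃ b0 : ℝ, μ + σ^2 * θ / ((T:ℝ) * μ) = b0 := ⟨_, rfl⟩
  rw [hb0] at hγ
  have hb0μ : μ < b0 := by
    have h : 0 < σ^2 * θ / ((T:ℝ) * μ) := by positivity
    rw [← hb0]; linarith
  have hb0pos : 0 < b0 := lt_trans hμ hb0μ
  have hγpos : 0 < γ := lt_of_lt_of_le (pow_pos hb0pos T) hγ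
  have hgb : b0 ≤ g := by
    have h2 : (b0 ^ T) ^ ((1:ℝ)/(T:ℝ)) ≤ γ ^ ((1:ℝ)/(T:ℝ)) :=
      Real.rpow_le_rpow (by positivity) hγ (by positivity)
    rw [hg] at h2
    rwa [← Real.rpow_natCast b0 T, ← Real.rpow_mul hb0pos.le, mul_one_div,
      div_self hTne, Real.rpow_one] at h2
  have hgμ : μ < g := lt_of_lt_of_le hb0μ hgb
  have hgpos : 0 < g := lt_trans hμ hgμ
  have hgT : g ^ T = γ := by
    rw [← hg, ← Real.rpow_natCast (γ ^ ((1:ℝ)/(T:ℝ))) T, ← Real.rpow_mul hγpos.le,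
      one_div_mul_cancel hTne, Real.rpow_one]
  obtain ⟨D, hD⟩ : ∃ D : ℝ, σ^2 * θ + (T:ℝ) * (μ - g)^2 = D := ⟨_, rfl⟩
  rw [hD] at hq
  have hDpos : 0 < D := by
    rw [← hD]
    have h1 : 0 < σ^2 * θ := by positivity
    have h2 : 0 ≤ (T:ℝ) * (μ - g)^2 := by positivity
    linarith
  have hq0 : 0 < q := by rw [hq]; positivity
  have hq1 : q < 1 := by
    rw [hq, div_lt_one hDpos, ← hD]
    have : 0 < (T:ℝ) * (μ - g)^2 := by
      have : μ - g ≠ 0 := by linarith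
      positivity
    linarith
  have hp0 : 0 < p := by rw [hp]; linarith
  have hqD : q * D = σ^2 * θ := by rw [hq]; field_simp
  have hsq : θ * q * (1 - q) / (T:ℝ) = (q * (g - μ) / σ)^2 := by
    rw [hq, ← hD]; field_simp; ring
  have hs : Real.sqrt (θ * q * (1 - q) / (T:ℝ)) = q * (g - μ) / σ := by
    rw [hsq, Real.sqrt_sq (div_nonneg (mul_nonneg hq0.le (by linarith)) hσ.le)]
  have hvq : v = q * g := by rw [hv, hs]; field_simp; ring
  have hvdiv : v / q = g := by rw [hvq, mul_div_cancel_left₀ _ (ne_of_gt hq0)]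
  have hu' : u = μ - q * g := by rw [hu, hvq]
  have hkey : σ^2*θ ≤ (T:ℝ)*μ*(g-μ) := by
    have h1 : σ^2*θ/((T:ℝ)*μ) ≤ g - μ := by
      have h2 := hgb; rw [← hb0] at h2; linarith
    calc σ^2*θ = σ^2*θ/((T:ℝ)*μ) * ((T:ℝ)*μ) := by field_simp
    _ ≤ (g-μ) * ((T:ℝ)*μ) := by
        apply mul_le_mul_of_nonneg_right h1; positivity
    _ = (T:ℝ)*μ*(g-μ) := by ring
  have hu0 : 0 ≤ u := by
    rw [hu', sub_nonneg, hq, div_mul_eq_mul_div, div_le_iff₀ hDpos, ← hD]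
    nlinarith [mul_nonneg (sub_nonneg.mpr hgμ.le) (sub_nonneg.mpr hkey)]
  have hup : u ≤ p * μ := by
    rw [hu', hp]
    have := mul_le_mul_of_nonneg_left hgμ.le hq0.le
    linarith
  have hupμ : u / p ≤ μ := (div_le_iff₀ hp0).mpr (by linarith)
  have hkey2 : q * ((T:ℝ)*(g-μ)^2) = (1-q) * (σ^2*θ) := by
    rw [← hD] at hqD; linear_combination hqD
  have hc : u^2/p + v^2/q = μ^2 + σ^2*θ/(T:ℝ) := by
    rw [hu', hvq, hp]
    have h1q : 1 - q ≠ 0 := by linarith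
    field_simp
    linear_combination hkey2
  -- ===== measure-theoretic part =====
  have key : ∀ f : (Fin T → ℝ) → ℝ, ∫ ξ, f ξ ∂P = p * f (fun _ => u/p) + q * f (fun _ => v/q) := by
    intro f
    have ia : Integrable f (Measure.dirac (fun _ : Fin T => u/p)) :=
      (integrable_const (f (fun _ => u/p))).congr (ae_eq_dirac f).symm
    have ib : Integrable f (Measure.dirac (fun _ : Fin T => v/q)) :=
      (integrable_const (f (fun _ => v/q))).congr (ae_eq_dirac f).symm
    show ∫ ξ, f ξ ∂(ENNReal.ofReal p • Measure.dirac (fun _ : Fin T => u/p) +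
        ENNReal.ofReal q • Measure.dirac (fun _ : Fin T => v/q)) = _
    rw [integral_add_measure (ia.smul_measure ENNReal.ofReal_ne_top)
      (ib.smul_measure ENNReal.ofReal_ne_top), integral_smul_measure, integral_smul_measure,
      integral_dirac, integral_dirac, ENNReal.toReal_ofReal hp0.le, ENNReal.toReal_ofReal hq0.le,
      smul_eq_mul, smul_eq_mul]
  refine ⟨?_, ?_, ?_, ?_, ?_⟩
  · -- probability measure
    constructor
    show (ENNReal.ofReal p • Measure.dirac (fun _ : Fin T => u/p) +
        ENNReal.ofReal q • Measure.dirac (fun _ : Fin T => v/q)) Set.univ = 1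
    rw [Measure.add_apply, Measure.smul_apply, Measure.smul_apply, measure_univ, measure_univ,
      smul_eq_mul, smul_eq_mul, mul_one, mul_one, ← ENNReal.ofReal_add hp0.le hq0.le,
      show p + q = 1 by rw [hp]; ring, ENNReal.ofReal_one]
  · -- a.e. nonnegativity
    have hS : MeasurableSet {ξ : Fin T → ℝ | ∀ t, 0 ≤ ξ t} := by
      have h : {ξ : Fin T → ℝ | ∀ t, 0 ≤ ξ t} = ⋂ t, {ξ | 0 ≤ ξ t} := by ext; simp
      rw [h]
      exact MeasurableSet.iInter fun t => measurableSet_le measurable_const (measurable_pi_apply t)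
    rw [ae_iff]
    have hSc : MeasurableSet {ξ : Fin T → ℝ | ¬ ∀ t, 0 ≤ ξ t} := by
      have h : {ξ : Fin T → ℝ | ¬ ∀ t, 0 ≤ ξ t} = {ξ : Fin T → ℝ | ∀ t, 0 ≤ ξ t}ᶜ := rfl
      rw [h]; exact hS.compl
    show (ENNReal.ofReal p • Measure.dirac (fun _ : Fin T => u/p) +
        ENNReal.ofReal q • Measure.dirac (fun _ : Fin T => v/q)) _ = 0
    rw [Measure.add_apply, Measure.smul_apply, Measure.smul_apply,
      Measure.dirac_apply' _ hSc, Measure.dirac_apply' _ hSc,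
      Set.indicator_of_notMem (by simpa using fun t => div_nonneg hu0 hp0.le),
      Set.indicator_of_notMem
        (by simpa using fun t => (by rw [hvdiv]; exact hgpos.le : 0 ≤ v / q))]
    simp
  · -- mean
    intro t
    rw [key (fun ξ => ξ t)]
    field_simp
    linear_combination hu
  · -- covariance PSD
    have hmom : ∀ s t : Fin T, ∫ ξ, ξ s * ξ t ∂P = μ^2 + σ^2*θ/(T:ℝ) := by
      intro s t
      rw [key (fun ξ => ξ s * ξ t)]
      have h : p * (u/p * (u/p)) + q * (v/q * (v/q)) = u^2/p + v^2/q := by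
        field_simp
      rw [h, hc]
    obtain ⟨k, hkdef⟩ : ∃ k : ℝ, (1-ρ)*σ^2 = k := ⟨_, rfl⟩
    have hk : 0 ≤ k := by rw [← hkdef]; nlinarith
    have hM : (Matrix.of fun s t : Fin T =>
        ((if s = t then (1 - ρ) * σ^2 else 0) + ρ * σ^2 + μ^2) - ∫ ξ, ξ s * ξ t ∂P) =
        Matrix.of (fun s t : Fin T => (if s = t then k else 0) - k/(T:ℝ)) := by
      ext s t
      simp only [Matrix.of_apply]
      rw [hmom s t, ← hkdef]
      by_cases h : s = t <;> simp only [h, if_true, if_false] <;> (rw [hθ]; field_simp; ring)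
    rw [hM, Matrix.posSemidef_iff_dotProduct_mulVec]
    constructor
    · ext i j
      simp [Matrix.conjTranspose_apply, eq_comm]
    · intro x
      have hquad : dotProduct (star x)
          (Matrix.mulVec (Matrix.of fun s t : Fin T => (if s = t then k else 0) - k/(T:ℝ)) x)
          = k * (∑ s, x s ^ 2) - k/(T:ℝ) * (∑ s, x s) ^ 2 := by
        simp only [dotProduct, Matrix.mulVec, Matrix.of_apply, Pi.star_apply, star_trivial,
          sub_mul, ite_mul, zero_mul, Finset.sum_sub_distrib, Finset.sum_ite_eq, Finset.mem_univ,
          if_true, Finset.mul_sum, mul_sub]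
        congr 1
        · exact Finset.sum_congr rfl fun s _ => by ring
        · rw [sq, Finset.sum_mul_sum, Finset.mul_sum]
          refine Finset.sum_congr rfl fun s _ => ?_
          rw [Finset.mul_sum]
          exact Finset.sum_congr rfl fun t _ => by ring
      rw [hquad]
      have hsum := sq_sum_le_card_mul_sum_sq (s := (Finset.univ : Finset (Fin T))) (f := x)
      rw [Finset.card_univ, Fintype.card_fin] at hsum
      have h1 : k/(T:ℝ) * (∑ s, x s)^2 ≤ k/(T:ℝ) * ((T:ℝ) * ∑ s, x s ^ 2) :=
        mul_le_mul_of_nonneg_left hsum (by positivity)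
      have h2 : k/(T:ℝ) * ((T:ℝ) * ∑ s, x s ^ 2) = k * ∑ s, x s ^ 2 := by
        field_simp
      linarith
  · -- tail probability
    have hSm : MeasurableSet {ξ : Fin T → ℝ | γ ≤ ∏ t, ξ t} := by
      have hm : Measurable fun ξ : Fin T → ℝ => ∏ t, ξ t :=
        Finset.measurable_prod _ fun t _ => measurable_pi_apply t
      exact measurableSet_le measurable_const hm
    have hca : ¬ γ ≤ (u/p) ^ T := by
      have h1 : (u/p) ^ T ≤ μ ^ T := pow_le_pow_left₀ (div_nonneg hu0 hp0.le) hupμ T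
      have h2 : μ ^ T < g ^ T := pow_lt_pow_left₀ hgμ hμ.le (by omega)
      rw [hgT] at h2
      linarith
    have hcb : γ ≤ (v/q) ^ T := by rw [hvdiv, hgT]
    show (ENNReal.ofReal p • Measure.dirac (fun _ : Fin T => u/p) +
        ENNReal.ofReal q • Measure.dirac (fun _ : Fin T => v/q)) _ = _
    rw [Measure.add_apply, Measure.smul_apply, Measure.smul_apply,
      Measure.dirac_apply' _ hSm, Measure.dirac_apply' _ hSm,
      Set.indicator_of_notMem (by simpa [div_pow] using hca), Set.indicator_of_mem (by simpa [div_pow] using hcb)]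
    simp
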